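/- Let γ: [0,1] → ℝ^n be a non-degenerate C^n curve. Then there exist a constant C' = C'(γ,n) > 0 and δ_0 = δ_0(γ,n) > 0 such that for every choice of points 0 < u_1 < u_2 < ... < u_n < 1 with u_n − u_1 < δ_0, one has |det(γ'(u_1), γ'(u_2), ..., γ'(u_n))| ≥ C'·∏_{1 ≤ i < j ≤ n} (u_j − u_i), where the determinant is of the n×n matrix whose columns are γ'(u_1), ..., γ'(u_n). -/

import Mathlib

open Finset

noncomputable section

/-- Non-degeneracy of a `C^n` curve `γ : [0,1] → ℝ^n`:
`det(γ'(t), γ''(t), …, γ^{(n)}(t)) ≠ 0` for every `t ∈ [0,1]`. -/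
def NonDegenerate (n : ℕ) (γ : ℝ → (Fin n → ℝ)) : Prop :=
  ∀ t ∈ Set.Icc (0 : ℝ) 1,
    (Matrix.of fun (i j : Fin n) =>
      iteratedDerivWithin ((j : ℕ) + 1) γ (Set.Icc 0 1) t i).det ≠ 0

namespace DetLowerBoundAux

open Set Polynomial

local notation "S" => Set.Icc (0:ℝ) 1

lemma hS : UniqueDiffOn ℝ S := uniqueDiffOn_Icc one_pos

lemma contDiff_polyEval (p : ℝ[X]) (m : ℕ) : ContDiff ℝ m (fun x => p.eval x) := by
  induction p using Polynomial.induction_on' with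
  | add p q hp hq => simpa using hp.add hq
  | monomial k a => simpa [Polynomial.eval_monomial] using
      (contDiff_const (c := a)).mul ((contDiff_id (E := ℝ)).pow k)

lemma polyIDW (k : ℕ) (p : ℝ[X]) {x : ℝ} (hx : x ∈ S) :
    iteratedDerivWithin k (fun y => p.eval y) S x
      = (Polynomial.derivative^[k] p).eval x := by
  induction k generalizing p with
  | zero => simp
  | succ k ih =>
    have heq : Set.EqOn (derivWithin (fun y => p.eval y) S)
        (fun y => p.derivative.eval y) S := fun y hy =>
      ((p.hasDerivAt y).hasDerivWithinAt).derivWithin (hS y hy)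
    rw [iteratedDerivWithin_succ',
      iteratedDerivWithin_congr heq hx, ih,
      Function.iterate_succ_apply]

/-- Iterated Rolle. -/
lemma rolle_iter : ∀ (k : ℕ) (f : ℝ → ℝ), ContDiffOn ℝ k f S →
    ∀ u : Fin (k+1) → ℝ, StrictMono u → (∀ i, u i ∈ Set.Ioo (0:ℝ) 1) →
    (∀ i, f (u i) = 0) →
    ∃ ξ ∈ Set.Icc (u 0) (u (Fin.last k)), iteratedDerivWithin k f S ξ = 0 := by
  intro k
  induction k with
  | zero =>
    intro f _ u _ _ hz
    exact ⟨u 0, ⟨le_refl _, le_refl _⟩, by simpa using hz 0⟩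
  | succ k IH =>
    intro f hf u hu hmem hz
    have hsub : ∀ i : Fin (k+1), Set.Icc (u i.castSucc) (u i.succ) ⊆ S :=
      fun i => Set.Icc_subset_Icc (hmem i.castSucc).1.le (hmem i.succ).2.le
    have h1 : ∀ i : Fin (k+1), ∃ c ∈ Set.Ioo (u i.castSucc) (u i.succ), deriv f c = 0 := by
      intro i
      exact exists_deriv_eq_zero (hu (Fin.castSucc_lt_succ (i := i)))
        (hf.continuousOn.mono (hsub i)) (by rw [hz, hz])
    choose v hv hv0 using h1
    have hvmem : ∀ i, v i ∈ Set.Ioo (0:ℝ) 1 := fun i =>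
      ⟨(hmem i.castSucc).1.trans (hv i).1, (hv i).2.trans (hmem i.succ).2⟩
    have hvmono : StrictMono v := by
      intro i j hij
      calc v i < u i.succ := (hv i).2
        _ ≤ u j.castSucc := hu.monotone (by
            have : (i:ℕ) < (j:ℕ) := hij
            rw [Fin.le_def, Fin.val_succ, Fin.coe_castSucc]; omega)
        _ < v j := (hv j).1
    have hg : ContDiffOn ℝ k (derivWithin f S) S := by
      apply hf.derivWithin hS
      exact_mod_cast le_refl _
    have hgz : ∀ i, derivWithin f S (v i) = 0 := by
      intro i
      rw [derivWithin_of_mem_nhds (Icc_mem_nhds (hvmem i).1 (hvmem i).2)]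
      exact hv0 i
    obtain ⟨ξ, hξ, hξ0⟩ := IH (derivWithin f S) hg v hvmono hvmem hgz
    have hξS : ξ ∈ S := by
      have h0 : (0:ℝ) < v 0 := (hvmem 0).1
      have h1 : v (Fin.last k) < 1 := (hvmem _).2
      exact ⟨(h0.trans_le hξ.1).le, (hξ.2.trans_lt h1).le⟩
    refine ⟨ξ, ⟨?_, ?_⟩, ?_⟩
    · calc u 0 = u (Fin.castSucc 0) := by norm_num
        _ ≤ v 0 := (hv 0).1.le
        _ ≤ ξ := hξ.1
    · calc ξ ≤ v (Fin.last k) := hξ.2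
        _ ≤ u (Fin.last (k+1)) := by
            have := (hv (Fin.last k)).2.le
            simpa [Fin.succ_last] using this
    · rw [iteratedDerivWithin_succ']
      exact hξ0

lemma coeff_interpolate (k : ℕ) (u : Fin (k+1) → ℝ) (hu : Function.Injective u)
    (r : Fin (k+1) → ℝ) :
    (Lagrange.interpolate Finset.univ u r).coeff k
      = ∑ i, Lagrange.nodalWeight Finset.univ u i * r i := by
  rw [Lagrange.interpolate_apply, Polynomial.finset_sum_coeff]
  refine Finset.sum_congr rfl fun i _ => ?_
  rw [Lagrange.basis_eq_prod_sub_inv_mul_nodal_div (Finset.mem_univ i),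
    ← Lagrange.nodal_erase_eq_nodal_div (Finset.mem_univ i)]
  have hmon : (Lagrange.nodal (Finset.univ.erase i) u).Monic := Lagrange.nodal_monic
  have hdeg : (Lagrange.nodal (Finset.univ.erase i) u).natDegree = k := by
    rw [Lagrange.natDegree_nodal, Finset.card_erase_of_mem (Finset.mem_univ i),
      Finset.card_univ, Fintype.card_fin]
    omega
  have hc1 : (Lagrange.nodal (Finset.univ.erase i) u).coeff k = 1 := by
    have h2 := hmon.coeff_natDegree
    rwa [hdeg] at h2
  rw [← mul_assoc, ← Polynomial.C_mul, Polynomial.coeff_C_mul, hc1, mul_one, mul_comm]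

/-- MVT for divided differences. -/
lemma dd_mvt (k : ℕ) (f : ℝ → ℝ) (hf : ContDiffOn ℝ k f S)
    (u : Fin (k+1) → ℝ) (hu : StrictMono u) (hmem : ∀ i, u i ∈ Set.Ioo (0:ℝ) 1) :
    ∃ ξ ∈ Set.Icc (u 0) (u (Fin.last k)),
      (Nat.factorial k : ℝ) * ∑ i, Lagrange.nodalWeight Finset.univ u i * f (u i)
        = iteratedDerivWithin k f S ξ := by
  set p := Lagrange.interpolate Finset.univ u (f ∘ u) with hp
  set q : ℝ → ℝ := fun x => p.eval x with hq
  have hinj : Set.InjOn u (Finset.univ : Finset (Fin (k+1))) := hu.injective.injOn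
  have hqc : ContDiffOn ℝ k q S := (contDiff_polyEval p k).contDiffOn
  have hz : ∀ i, (f - q) (u i) = 0 := by
    intro i
    have := Lagrange.eval_interpolate_at_node (f ∘ u) hinj (Finset.mem_univ i)
    simp only [Pi.sub_apply, hq, ← hp, this, Function.comp_apply, sub_self]
    rw [hp, this, Function.comp_apply, sub_self]
  obtain ⟨ξ, hξ, hξ0⟩ := rolle_iter k (f - q) (hf.sub hqc) u hu hmem hz
  have hξS : ξ ∈ S :=
    ⟨((hmem 0).1.trans_le hξ.1).le, (hξ.2.trans_lt (hmem _).2).le⟩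
  have hsub := iteratedDerivWithin_sub hξS hS (hf ξ hξS) (hqc ξ hξS)
  rw [hsub] at hξ0
  have hdegp : p.natDegree ≤ k := by
    have h1 : p.degree < (k+1 : ℕ) := by
      rw [hp]
      simpa using Lagrange.degree_interpolate_lt (f ∘ u) hinj
    by_cases hp0 : p = 0
    · simp [hp0]
    · have := (Polynomial.natDegree_lt_iff_degree_lt hp0).mpr h1
      omega
  have hconst : Polynomial.derivative^[k] p
      = Polynomial.C ((Nat.factorial k : ℝ) * p.coeff k) := by
    have hd0 : (Polynomial.derivative^[k] p).natDegree = 0 := by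
      have := Polynomial.natDegree_iterate_derivative p k
      omega
    rw [Polynomial.eq_C_of_natDegree_le_zero hd0.le,
      Polynomial.coeff_iterate_derivative]
    simp [Nat.descFactorial_self, nsmul_eq_mul]
  have hq' : iteratedDerivWithin k q S ξ = (Nat.factorial k : ℝ) * p.coeff k := by
    rw [hq, polyIDW k p hξS, hconst, Polynomial.eval_C]
  refine ⟨ξ, hξ, ?_⟩
  have hcoeff := coeff_interpolate k u hu.injective (f ∘ u)
  rw [← hp] at hcoeff
  have : iteratedDerivWithin k f S ξ = iteratedDerivWithin k q S ξ := by
    linarith [hξ0]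
  rw [this, hq', hcoeff]
  simp [Function.comp]

lemma map_castLE_univ {n : ℕ} (k : Fin n) :
    (Finset.univ : Finset (Fin (k.val+1))).map
      (Fin.castLEEmb (by omega : k.val+1 ≤ n)) = Finset.Iic k := by
  ext x
  simp only [Finset.mem_map, Finset.mem_univ, true_and, Finset.mem_Iic, Fin.castLEEmb_apply]
  constructor
  · rintro ⟨m, rfl⟩
    rw [Fin.le_def, Fin.coe_castLE]
    omega
  · intro hx
    rw [Fin.le_def] at hx
    exact ⟨⟨x.val, by omega⟩, by ext; simp⟩

lemma nodalWeight_castLE {n : ℕ} (k : Fin n) (u : Fin n → ℝ) (m : Fin (k.val+1)) :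
    Lagrange.nodalWeight Finset.univ (fun m' : Fin (k.val+1) =>
        u (Fin.castLE (by omega) m')) m
      = Lagrange.nodalWeight (Finset.Iic k) u (Fin.castLE (by omega) m) := by
  unfold Lagrange.nodalWeight
  have h1 : (Finset.Iic k).erase (Fin.castLE (by omega) m)
      = (Finset.univ.erase m).map (Fin.castLEEmb (by omega : k.val+1 ≤ n)) := by
    rw [Finset.map_erase, map_castLE_univ]
    rfl
  rw [h1, Finset.prod_map]
  rfl

lemma sum_weights_castLE {n : ℕ} (k : Fin n) (u : Fin n → ℝ) (g : Fin n → ℝ) :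
    ∑ m : Fin (k.val+1), Lagrange.nodalWeight Finset.univ
        (fun m' : Fin (k.val+1) => u (Fin.castLE (by omega) m')) m
        * g (Fin.castLE (by omega) m)
      = ∑ l ∈ Finset.Iic k, Lagrange.nodalWeight (Finset.Iic k) u l * g l := by
  rw [← map_castLE_univ k, Finset.sum_map]
  refine Finset.sum_congr rfl fun m _ => ?_
  simp only [Fin.castLEEmb_apply]
  rw [nodalWeight_castLE, map_castLE_univ]

lemma prod_pairs_swap {n : ℕ} (u : Fin n → ℝ) :
    ∏ k : Fin n, ∏ j ∈ Finset.Iio k, (u k - u j)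
      = ∏ i : Fin n, ∏ j ∈ Finset.Ioi i, (u j - u i) := by
  rw [Finset.prod_comm' (t' := Finset.univ) (s' := fun j => Finset.Ioi j)]
  intro k j
  simp [Finset.mem_Iio, Finset.mem_Ioi]

lemma det_C_eq {n : ℕ} (u : Fin n → ℝ) :
    (Matrix.of fun k l : Fin n =>
        if l ∈ Finset.Iic k then Lagrange.nodalWeight (Finset.Iic k) u l else 0).det
      = (∏ i : Fin n, ∏ j ∈ Finset.Ioi i, (u j - u i))⁻¹ := by
  set C := Matrix.of fun k l : Fin n =>
    if l ∈ Finset.Iic k then Lagrange.nodalWeight (Finset.Iic k) u l else 0 with hC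
  have htri : C.BlockTriangular OrderDual.toDual := by
    intro k l h
    have hkl : k < l := h
    simp only [hC, Matrix.of_apply, Finset.mem_Iic]
    rw [if_neg (by exact not_le.mpr hkl)]
  rw [Matrix.det_of_lowerTriangular C htri]
  have hdiag : ∀ k : Fin n, C k k = ∏ j ∈ Finset.Iio k, (u k - u j)⁻¹ := by
    intro k
    simp only [hC, Matrix.of_apply, if_pos (Finset.mem_Iic.mpr le_rfl)]
    rw [Lagrange.nodalWeight, Finset.Iic_erase]
  rw [Finset.prod_congr rfl fun k _ => hdiag k, ← prod_pairs_swap u, ← Finset.prod_inv_distrib]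
  refine Finset.prod_congr rfl fun k _ => ?_
  rw [← Finset.prod_inv_distrib]

lemma iDW_proj {n N m : ℕ} (F : ℝ → (Fin n → ℝ)) (hF : ContDiffOn ℝ N F S)
    (hm : m ≤ N) (i : Fin n) {x : ℝ} (hx : x ∈ S) :
    iteratedDerivWithin m (fun t => F t i) S x = iteratedDerivWithin m F S x i := by
  have h := (ContinuousLinearMap.proj (R := ℝ) (φ := fun _ : Fin n => ℝ)
    i).iteratedFDerivWithin_comp_left (hF x hx) hS hx (i := m) (by exact_mod_cast hm)
  rw [iteratedDerivWithin_eq_iteratedFDerivWithin]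
  have hfe : (fun t => F t i) = (⇑(ContinuousLinearMap.proj (R := ℝ)
      (φ := fun _ : Fin n => ℝ) i) ∘ F) := rfl
  rw [hfe, h, iteratedDerivWithin_eq_iteratedFDerivWithin]
  rfl

end DetLowerBoundAux

open DetLowerBoundAux in
/-- Lower bound for `|det(γ'(u_1),…,γ'(u_n))|` for a non-degenerate `C^n`
curve, for points contained in an interval of length `< δ₀`
(Proposition 4.1 (b)). -/
theorem det_lower_bound (n : ℕ) (hn : 1 ≤ n) (γ : ℝ → (Fin n → ℝ))
    (hγ : ContDiffOn ℝ n γ (Set.Icc 0 1)) (hnd : NonDegenerate n γ) :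
    ∃ C' δ₀ : ℝ, 0 < C' ∧ 0 < δ₀ ∧
      ∀ u : Fin n → ℝ, StrictMono u → (∀ i, u i ∈ Set.Ioo (0 : ℝ) 1) →
        u ⟨n - 1, by omega⟩ - u ⟨0, by omega⟩ < δ₀ →
        C' * ∏ i, ∏ j ∈ Finset.Ioi i, (u j - u i)
          ≤ |(Matrix.of fun (i j : Fin n) => derivWithin γ (Set.Icc 0 1) (u j) i).det| := by
  classical
  -- the scaled derivative matrix entries, as a function of `t`
  set A : ℝ → (Fin n → Fin n → ℝ) := fun t i k =>
    ((Nat.factorial (k : ℕ) : ℝ))⁻¹ * iteratedDerivWithin ((k : ℕ) + 1) γ (Set.Icc 0 1) t i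
    with hA
  set D : (Fin n → Fin n → ℝ) → ℝ := fun M => (Matrix.of M).det with hD
  set W : ℝ → ℝ := fun t => D (A t) with hW
  -- continuity of A
  have hAcont : ContinuousOn A (Set.Icc (0:ℝ) 1) := by
    rw [continuousOn_pi]
    intro i
    rw [continuousOn_pi]
    intro k
    refine continuousOn_const.mul ?_
    have h1 : ContinuousOn (iteratedDerivWithin ((k:ℕ)+1) γ (Set.Icc 0 1)) (Set.Icc 0 1) := by
      apply hγ.continuousOn_iteratedDerivWithin _ hS
      exact_mod_cast Nat.succ_le_of_lt k.isLt
    exact (continuous_apply i).comp_continuousOn h1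
  have hDcont : Continuous D := Continuous.matrix_det (by exact continuous_id)
  have hWcont : ContinuousOn W (Set.Icc (0:ℝ) 1) := hDcont.comp_continuousOn hAcont
  -- W is nonzero on [0,1]
  have hWne : ∀ t ∈ Set.Icc (0:ℝ) 1, W t ≠ 0 := by
    intro t ht
    have hdet := Matrix.det_mul_row (fun k : Fin n => ((Nat.factorial (k:ℕ) : ℝ))⁻¹)
      (Matrix.of fun (i j : Fin n) => iteratedDerivWithin ((j : ℕ) + 1) γ (Set.Icc 0 1) t i)
    have hWt : W t = (∏ k : Fin n, ((Nat.factorial (k:ℕ) : ℝ))⁻¹) *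
        (Matrix.of fun (i j : Fin n) =>
          iteratedDerivWithin ((j : ℕ) + 1) γ (Set.Icc 0 1) t i).det := by
      simp only [hW, hD, hA]
      have := hdet
      simp only [Matrix.of_apply] at this
      exact this
    rw [hWt]
    exact mul_ne_zero (Finset.prod_ne_zero_iff.mpr fun k _ =>
      inv_ne_zero (by exact_mod_cast (Nat.factorial_pos _).ne')) (hnd t ht)
  -- minimum of |W|
  obtain ⟨t₀, ht₀, hmin⟩ := isCompact_Icc.exists_isMinOn (α := ℝ)
    ⟨0, Set.left_mem_Icc.mpr one_pos.le⟩ hWcont.abs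
  set c : ℝ := |W t₀| with hc
  have hcpos : 0 < c := abs_pos.mpr (hWne t₀ ht₀)
  have hcmin : ∀ t ∈ Set.Icc (0:ℝ) 1, c ≤ |W t| := fun t ht => hmin ht
  -- bound for A
  obtain ⟨B, hB⟩ := isCompact_Icc.exists_bound_of_continuousOn hAcont
  have hB0 : 0 ≤ B := le_trans (norm_nonneg _) (hB 0 (Set.left_mem_Icc.mpr one_pos.le))
  set K := Metric.closedBall (0 : Fin n → Fin n → ℝ) (B+1) with hK
  have hKc : IsCompact K := isCompact_closedBall _ _
  -- uniform continuity of D on K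
  have hUCD : UniformContinuousOn D K :=
    hKc.uniformContinuousOn_of_continuous hDcont.continuousOn
  obtain ⟨η, hηpos, hη⟩ := (Metric.uniformContinuousOn_iff.mp hUCD) (c/2) (half_pos hcpos)
  -- uniform continuity of A on [0,1]
  have hUCA : UniformContinuousOn A (Set.Icc (0:ℝ) 1) :=
    isCompact_Icc.uniformContinuousOn_of_continuous hAcont
  obtain ⟨δ₀, hδ₀pos, hδ₀⟩ := (Metric.uniformContinuousOn_iff.mp hUCA) η hηpos
  refine ⟨c/2, δ₀, half_pos hcpos, hδ₀pos, ?_⟩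
  intro u hu hmem hspread
  set i0 : Fin n := ⟨0, by omega⟩ with hi0
  set ilast : Fin n := ⟨n-1, by omega⟩ with hilast
  have hIccS : Set.Icc (u i0) (u ilast) ⊆ Set.Icc (0:ℝ) 1 :=
    Set.Icc_subset_Icc (hmem i0).1.le (hmem ilast).2.le
  -- the matrices
  set M : Matrix (Fin n) (Fin n) ℝ :=
    Matrix.of fun (i j : Fin n) => derivWithin γ (Set.Icc 0 1) (u j) i with hM
  set C : Matrix (Fin n) (Fin n) ℝ := Matrix.of fun k l : Fin n =>
    if l ∈ Finset.Iic k then Lagrange.nodalWeight (Finset.Iic k) u l else 0 with hC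
  set P : ℝ := ∏ i : Fin n, ∏ j ∈ Finset.Ioi i, (u j - u i) with hP
  have hPpos : 0 < P := Finset.prod_pos fun i _ => Finset.prod_pos fun j hj =>
    sub_pos.mpr (hu (Finset.mem_Ioi.mp hj))
  -- key: entries of M * Cᵀ are values of A at intermediate points
  have key : ∀ i k : Fin n, ∃ ξ ∈ Set.Icc (u i0) (u ilast),
      (M * C.transpose) i k = A ξ i k := by
    intro i k
    -- restricted points
    have hkn : k.val + 1 ≤ n := by omega
    set v : Fin (k.val+1) → ℝ := fun m => u (Fin.castLE hkn m) with hv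
    have hvmono : StrictMono v := by
      intro a b hab
      refine hu ?_
      rw [Fin.lt_def]
      simp only [Fin.coe_castLE]
      exact hab
    have hvmem : ∀ m, v m ∈ Set.Ioo (0:ℝ) 1 := fun m => hmem _
    -- smoothness of the component of the derivative
    have hn1 : ContDiffOn ℝ (n-1 : ℕ) (derivWithin γ (Set.Icc 0 1)) (Set.Icc 0 1) := by
      apply hγ.derivWithin hS
      exact_mod_cast (by omega : (n-1)+1 ≤ n)
    set f : ℝ → ℝ := fun t => derivWithin γ (Set.Icc 0 1) t i with hf
    have hfC : ContDiffOn ℝ (k.val : ℕ) f (Set.Icc 0 1) := by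
      have h1 : ContDiffOn ℝ (n-1 : ℕ) f (Set.Icc 0 1) :=
        hn1.continuousLinearMap_comp
          (ContinuousLinearMap.proj (R := ℝ) (φ := fun _ : Fin n => ℝ) i)
      exact h1.of_le (by exact_mod_cast (by omega : k.val ≤ n - 1))
    obtain ⟨ξ, hξIcc, hξeq⟩ := dd_mvt k.val f hfC v hvmono hvmem
    have hv0 : v 0 = u i0 := congrArg u (Fin.ext rfl)
    have hvlast : v (Fin.last k.val) = u k := congrArg u (Fin.ext rfl)
    have hξIcc' : ξ ∈ Set.Icc (u i0) (u ilast) := by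
      rw [hv0, hvlast] at hξIcc
      refine ⟨hξIcc.1, hξIcc.2.trans (hu.monotone ?_)⟩
      rw [Fin.le_def]
      simp [hilast]
      omega
    have hξS : ξ ∈ Set.Icc (0:ℝ) 1 := hIccS hξIcc'
    refine ⟨ξ, hξIcc', ?_⟩
    -- compute the matrix entry
    have hentry : (M * C.transpose) i k
        = ∑ l ∈ Finset.Iic k, Lagrange.nodalWeight (Finset.Iic k) u l * f (u l) := by
      rw [Matrix.mul_apply]
      have : ∀ l : Fin n, M i l * C.transpose l k
          = if l ∈ Finset.Iic k then Lagrange.nodalWeight (Finset.Iic k) u l * f (u l)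
            else 0 := by
        intro l
        rw [Matrix.transpose_apply, hC, hM]
        simp only [Matrix.of_apply]
        split_ifs with h
        · ring
        · ring
      rw [Finset.sum_congr rfl fun l _ => this l, Finset.sum_ite_mem, Finset.univ_inter]
    rw [hentry, ← sum_weights_castLE k u (fun l => f (u l))]
    -- now use the MVT result
    have hfact : ((Nat.factorial k.val : ℝ)) ≠ 0 := by
      exact_mod_cast (Nat.factorial_pos _).ne'
    have hsum : ∑ m : Fin (k.val+1), Lagrange.nodalWeight Finset.univ
        (fun m' : Fin (k.val+1) => u (Fin.castLE (by omega) m')) m * f (u (Fin.castLE (by omega) m))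
        = (Nat.factorial k.val : ℝ)⁻¹ * iteratedDerivWithin k.val f (Set.Icc 0 1) ξ := by
      rw [← hξeq, inv_mul_cancel_left₀ hfact]
    rw [hsum]
    -- relate iterated derivatives
    have hproj : iteratedDerivWithin k.val f (Set.Icc 0 1) ξ
        = iteratedDerivWithin k.val (derivWithin γ (Set.Icc 0 1)) (Set.Icc 0 1) ξ i :=
      iDW_proj (derivWithin γ (Set.Icc 0 1)) hn1 (by omega) i hξS
    have hsucc : iteratedDerivWithin (k.val+1) γ (Set.Icc 0 1) ξ
        = iteratedDerivWithin k.val (derivWithin γ (Set.Icc 0 1)) (Set.Icc 0 1) ξ :=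
      congrFun iteratedDerivWithin_succ' ξ
    rw [hA]
    simp only []
    rw [hproj, ← hsucc]
  choose ξ hξIcc hξval using key
  set Nf : Fin n → Fin n → ℝ := fun i k => A (ξ i k) i k with hNf
  have hMCN : M * C.transpose = Matrix.of Nf := by
    ext i k
    exact hξval i k
  -- dist from A (u i0)
  have ht0S : u i0 ∈ Set.Icc (0:ℝ) 1 := ⟨(hmem i0).1.le, (hmem i0).2.le⟩
  have hdistN : dist Nf (A (u i0)) < η := by
    rw [dist_pi_lt_iff hηpos]
    intro i
    rw [dist_pi_lt_iff hηpos]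
    intro k
    have h1 : dist (Nf i k) (A (u i0) i k) ≤ dist (A (ξ i k)) (A (u i0)) := by
      calc dist (Nf i k) (A (u i0) i k) = dist (A (ξ i k) i k) (A (u i0) i k) := rfl
        _ ≤ dist (A (ξ i k) i) (A (u i0) i) := dist_le_pi_dist _ _ k
        _ ≤ dist (A (ξ i k)) (A (u i0)) := dist_le_pi_dist _ _ i
    refine h1.trans_lt ?_
    apply hδ₀ _ (hIccS (hξIcc i k)) _ ht0S
    rw [Real.dist_eq, abs_of_nonneg (by linarith [(hξIcc i k).1])]
    linarith [(hξIcc i k).2, (hξIcc i k).1, hspread]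
  -- membership in K
  have hNfK : Nf ∈ K := by
    rw [hK, Metric.mem_closedBall, dist_zero_right]
    rw [pi_norm_le_iff_of_nonneg (by linarith)]
    intro i
    rw [pi_norm_le_iff_of_nonneg (by linarith)]
    intro k
    calc ‖Nf i k‖ = ‖A (ξ i k) i k‖ := rfl
      _ ≤ ‖A (ξ i k) i‖ := norm_le_pi_norm _ k
      _ ≤ ‖A (ξ i k)‖ := norm_le_pi_norm _ i
      _ ≤ B := hB _ (hIccS (hξIcc i k))
      _ ≤ B + 1 := by linarith
  have hAt0K : A (u i0) ∈ K := by
    rw [hK, Metric.mem_closedBall, dist_zero_right]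
    exact (hB _ ht0S).trans (by linarith)
  -- |det Nf| ≥ c/2
  have hdistD : dist (D Nf) (D (A (u i0))) < c/2 := hη _ hNfK _ hAt0K hdistN
  have hDlow : c/2 ≤ |D Nf| := by
    have h1 : c ≤ |W (u i0)| := hcmin _ ht0S
    have h2 : |D Nf - W (u i0)| < c/2 := by
      rw [← Real.dist_eq]
      exact hdistD
    have h3 : |W (u i0)| - |D Nf| ≤ |D Nf - W (u i0)| := by
      rw [abs_sub_comm]
      exact abs_sub_abs_le_abs_sub _ _
    linarith
  -- determinant identity
  have hdetN : (M * C.transpose).det = M.det * P⁻¹ := by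
    rw [Matrix.det_mul, Matrix.det_transpose, hC, det_C_eq u, hP]
  have hdetNf : (Matrix.of Nf).det = M.det * P⁻¹ := by rw [← hMCN, hdetN]
  have hDNf : D Nf = M.det * P⁻¹ := hdetNf
  -- conclude
  have habs : |M.det| = P * |D Nf| := by
    rw [hDNf, abs_mul, abs_inv, abs_of_pos hPpos]
    field_simp
  calc c/2 * P ≤ |D Nf| * P := by
        apply mul_le_mul_of_nonneg_right hDlow hPpos.le
    _ = P * |D Nf| := mul_comm _ _
    _ = |M.det| := habs.symm

end
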